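/- Let X be a metric space, p ∈ [1,∞), and k a positive integer. Define f : X^k → W_p(X) by f(x_1,…,x_k) = α·Σ_{i=1}^k 2^{-i}·δ_{x_i}, where α = 1/(1 − 2^{-k}). Then f is Lipschitz with constant (α/2)^{1/p} with respect to the metric d_p on X^k: W_p(f(x̄), f(ȳ)) ≤ (2^{k−1}/(2^k − 1))^{1/p} · d_p(x̄, ȳ). -/

import Mathlib

open MeasureTheory ENNReal

private lemma map_finsum_measure {α β : Type*} [MeasurableSpace α] [MeasurableSpace β] {ι : Type*}
    (s : Finset ι) (μ : ι → Measure α) {f : α → β} (hf : Measurable f) :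
    (∑ i ∈ s, μ i).map f = ∑ i ∈ s, (μ i).map f := by
  classical
  induction s using Finset.induction with
  | empty => simp
  | insert _ _ h ih => simp [Finset.sum_insert h, Measure.map_add _ _ hf, ih]

/-- `π` is a coupling of `μ` and `ν`. -/
def IsCoupling {X : Type*} [MeasurableSpace X] (μ ν : Measure X)
    (π : Measure (X × X)) : Prop :=
  π.map Prod.fst = μ ∧ π.map Prod.snd = ν

/-- The `L^p` Wasserstein distance between two measures, as the infimal `p`-cost
over all couplings, to the power `1/p`. -/
noncomputable def Wp {X : Type*} [MetricSpace X] [MeasurableSpace X]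
    (p : ℝ) (μ ν : Measure X) : ℝ≥0∞ :=
  (⨅ (π : Measure (X × X)) (_ : IsCoupling μ ν π),
    ∫⁻ z, ENNReal.ofReal (dist z.1 z.2 ^ p) ∂π) ^ (1 / p)

/-- The embedding `f : X^k → W_p(X)`, `f(x₁,…,x_k) = α ∑ 2⁻ⁱ δ_{xᵢ}` with
`α = 1/(1 - 2⁻ᵏ)`. -/
noncomputable def powerEmbedding {X : Type*} [MeasurableSpace X] (k : ℕ)
    (x : Fin k → X) : Measure X :=
  ENNReal.ofReal ((1 - (2:ℝ) ^ (-(k:ℤ)))⁻¹) •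
    ∑ i : Fin k, ENNReal.ofReal ((2:ℝ) ^ (-(i:ℤ) - 1)) • Measure.dirac (x i)

/-- the embedding of `X^k` into `W_p(X)` is Lipschitz with constant
`(2^{k-1}/(2^k-1))^{1/p}` for the metric `d_p` on `X^k`. -/
theorem stmt5 {X : Type*} [MetricSpace X] [MeasurableSpace X] [BorelSpace X]
    (p : ℝ) (hp : 1 ≤ p) (k : ℕ) (hk : 0 < k) (x y : Fin k → X) :
    Wp p (powerEmbedding k x) (powerEmbedding k y) ≤
      ENNReal.ofReal
        (((2:ℝ) ^ (k - 1) / ((2:ℝ) ^ k - 1)) ^ (1 / p) *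
          (∑ i : Fin k, dist (x i) (y i) ^ p) ^ (1 / p)) := by
  set α : ℝ := (1 - (2:ℝ) ^ (-(k:ℤ)))⁻¹ with hα
  set c : Fin k → ℝ := fun i => (2:ℝ) ^ (-(i:ℤ) - 1) with hc
  set π : Measure (X × X) :=
    ENNReal.ofReal α • ∑ i : Fin k, ENNReal.ofReal (c i) • Measure.dirac (x i, y i) with hπ
  have hcoup : IsCoupling (powerEmbedding k x) (powerEmbedding k y) π := by
    constructor
    · rw [hπ, Measure.map_smul, map_finsum_measure _ _ measurable_fst]
      simp only [Measure.map_smul, Measure.map_dirac' measurable_fst]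
      rfl
    · rw [hπ, Measure.map_smul, map_finsum_measure _ _ measurable_snd]
      simp only [Measure.map_smul, Measure.map_dirac' measurable_snd]
      rfl
  have hp0 : 0 < p := lt_of_lt_of_le one_pos hp
  have hip : (0:ℝ) ≤ 1 / p := by positivity
  have h2k : (1:ℝ) < (2:ℝ) ^ k := one_lt_pow₀ (one_lt_two : (1:ℝ) < 2) hk.ne'
  have hden : (0:ℝ) < (2:ℝ) ^ k - 1 := by linarith
  have hαval : α = (2:ℝ) ^ k / ((2:ℝ) ^ k - 1) := by
    rw [hα, zpow_neg, zpow_natCast]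
    rw [show (1:ℝ) - ((2:ℝ)^k)⁻¹ = ((2:ℝ)^k - 1) / (2:ℝ)^k by
      field_simp]
    rw [inv_div]
  have hα0 : 0 < α := by rw [hαval]; positivity
  have hS0 : (0:ℝ) ≤ ∑ i : Fin k, dist (x i) (y i) ^ p :=
    Finset.sum_nonneg fun i _ => Real.rpow_nonneg dist_nonneg _
  -- cost computation
  have hcost : (∫⁻ z, ENNReal.ofReal (dist z.1 z.2 ^ p) ∂π)
      ≤ ENNReal.ofReal (α / 2 * ∑ i : Fin k, dist (x i) (y i) ^ p) := by
    rw [hπ, lintegral_smul_measure, lintegral_finset_sum_measure]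
    simp only [lintegral_smul_measure, lintegral_dirac]
    have hterm : ∀ i : Fin k, ENNReal.ofReal (c i) * ENNReal.ofReal (dist (x i) (y i) ^ p)
        ≤ ENNReal.ofReal (2⁻¹ * dist (x i) (y i) ^ p) := by
      intro i
      rw [← ENNReal.ofReal_mul (by positivity)]
      apply ENNReal.ofReal_le_ofReal
      apply mul_le_mul_of_nonneg_right _ (Real.rpow_nonneg dist_nonneg _)
      calc c i = (2:ℝ) ^ (-(i:ℤ) - 1) := rfl
        _ ≤ (2:ℝ) ^ (-1:ℤ) := by
            apply zpow_le_zpow_right₀ one_le_two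
            omega
        _ = 2⁻¹ := by norm_num
    calc ENNReal.ofReal α * ∑ i : Fin k,
          ENNReal.ofReal (c i) * ENNReal.ofReal (dist (x i) (y i) ^ p)
        ≤ ENNReal.ofReal α * ∑ i : Fin k, ENNReal.ofReal (2⁻¹ * dist (x i) (y i) ^ p) := by
          gcongr with i
          exact hterm i
      _ = ENNReal.ofReal (α / 2 * ∑ i : Fin k, dist (x i) (y i) ^ p) := by
          rw [← ENNReal.ofReal_sum_of_nonneg (fun i _ => by positivity),
            ← ENNReal.ofReal_mul hα0.le, ← Finset.mul_sum]
          ring_nf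
  have hWp : Wp p (powerEmbedding k x) (powerEmbedding k y)
      ≤ ENNReal.ofReal (α / 2 * ∑ i : Fin k, dist (x i) (y i) ^ p) ^ (1 / p) := by
    apply ENNReal.rpow_le_rpow _ hip
    exact le_trans (iInf₂_le π hcoup) hcost
  refine hWp.trans ?_
  rw [ENNReal.ofReal_rpow_of_nonneg (by positivity) hip]
  apply ENNReal.ofReal_le_ofReal
  rw [Real.mul_rpow (by positivity) hS0]
  apply mul_le_mul_of_nonneg_right _ (Real.rpow_nonneg hS0 _)
  apply Real.rpow_le_rpow (by positivity) _ hip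
  have hke : (2:ℝ) ^ k = 2 * 2 ^ (k - 1) := by
    rw [← pow_succ']
    congr 1
    omega
  have h2 : ((2:ℝ) ^ k - 1) ≠ 0 := hden.ne'
  have : α / 2 = (2:ℝ) ^ (k - 1) / ((2:ℝ) ^ k - 1) := by
    rw [hαval]
    field_simp
    rw [hke]
  rw [this]
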